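/- Let f = Σ a_{ij}x^i y^j ∈ ℂ[[x,y]] be nonzero and let ξ=(ξ₁,ξ₂), ν=(ν₁,ν₂) ∈ ℕ² with det(ξ,ν)=1. The linear map T : (i,j) ↦ (iξ₁+jξ₂, iν₁+jν₂) is injective on ℕ², so F = Σ_{(i,j)∈supp f} a_{ij} u^{iξ₁+jξ₂} v^{iν₁+jν₂} is a well-defined element of ℂ[[u,v]] whose support equals T(supp f). Moreover there is a unique f̃ ∈ ℂ[[u,v]] with F = u^{l(f,ξ)} v^{l(f,ν)} · f̃, and the order of f̃ (the minimum of p+q over (p,q) ∈ supp f̃) equals l(f,ξ+ν) − l(f,ξ) − l(f,ν). -/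

import Mathlib

noncomputable section

/-- The ring ℂ[[x,y]] of formal power series in two variables over ℂ. -/
abbrev PS := MvPowerSeries (Fin 2) ℂ

/-- The exponent pair (i,j) as a multi-index for `MvPowerSeries (Fin 2) ℂ`. -/
def idx (p : ℕ × ℕ) : Fin 2 →₀ ℕ := Finsupp.single 0 p.1 + Finsupp.single 1 p.2

/-- The coefficient a_{ij} of x^i y^j in f. -/
def coef (f : PS) (p : ℕ × ℕ) : ℂ := MvPowerSeries.coeff (idx p) f

/-- The support of f: the set of (i,j) ∈ ℕ² with a_{ij} ≠ 0. -/
def supp (f : PS) : Set (ℕ × ℕ) := {p | coef f p ≠ 0}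

/-- l(f,w) = min_{(i,j) ∈ supp f} (i·w₁ + j·w₂). -/
def lFun (f : PS) (w : ℕ × ℕ) : ℕ := sInf ((fun p : ℕ × ℕ => p.1 * w.1 + p.2 * w.2) '' supp f)

/-- The order of a power series: the minimum of p + q over (p,q) in the support. -/
def ordPS (f : PS) : ℕ := sInf ((fun p : ℕ × ℕ => p.1 + p.2) '' supp f)

@[simp] lemma idx_apply0 (p : ℕ × ℕ) : idx p 0 = p.1 := by
  simp [idx, Finsupp.single_apply]
@[simp] lemma idx_apply1 (p : ℕ × ℕ) : idx p 1 = p.2 := by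
  simp [idx, Finsupp.single_apply]

lemma idx_repr (m : Fin 2 →₀ ℕ) : idx (m 0, m 1) = m := by
  ext i; fin_cases i <;> simp [idx, Finsupp.single_apply]

lemma idx_inj : Function.Injective idx := by
  intro p q h
  have h0 := congrArg (fun m : Fin 2 →₀ ℕ => m 0) h
  have h1 := congrArg (fun m : Fin 2 →₀ ℕ => m 1) h
  simp only [idx_apply0, idx_apply1] at h0 h1
  exact Prod.ext h0 h1

lemma idx_add (p q : ℕ × ℕ) : idx (p + q) = idx p + idx q := by
  ext i; fin_cases i <;> simp

lemma idx_le_iff (p : ℕ × ℕ) (m : Fin 2 →₀ ℕ) : idx p ≤ m ↔ p.1 ≤ m 0 ∧ p.2 ≤ m 1 := by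
  rw [Finsupp.le_def]
  constructor
  · intro h; exact ⟨by simpa using h 0, by simpa using h 1⟩
  · rintro ⟨h1, h2⟩ i; fin_cases i <;> simpa

/-- Extensionality via `coef`. -/
lemma coef_ext {g h : PS} (H : ∀ p : ℕ × ℕ, coef g p = coef h p) : g = h := by
  apply MvPowerSeries.ext
  intro m
  have := H (m 0, m 1)
  rwa [coef, coef, idx_repr] at this

lemma supp_nonempty {f : PS} (hf : f ≠ 0) : (supp f).Nonempty := by
  by_contra h
  apply hf
  apply coef_ext
  intro p
  rw [Set.not_nonempty_iff_eq_empty] at h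
  have : p ∉ supp f := by rw [h]; exact Set.notMem_empty p
  simpa [supp, coef, Set.mem_setOf_eq, not_not] using this

lemma lFun_le {f : PS} {p : ℕ × ℕ} (hp : p ∈ supp f) (w : ℕ × ℕ) :
    lFun f w ≤ p.1 * w.1 + p.2 * w.2 :=
  Nat.sInf_le ⟨p, hp, rfl⟩

/-- X₀^a * X₁^b as a monomial. -/
lemma Xpow_mul_Xpow (a b : ℕ) : (MvPowerSeries.X 0 : PS) ^ a * MvPowerSeries.X 1 ^ b
    = MvPowerSeries.monomial (idx (a, b)) 1 := by
  rw [MvPowerSeries.X_pow_eq, MvPowerSeries.X_pow_eq, MvPowerSeries.monomial_mul_monomial,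
    one_mul]
  rfl

lemma coef_shift (a b : ℕ) (g : PS) (q : ℕ × ℕ) :
    coef ((MvPowerSeries.X 0 : PS) ^ a * MvPowerSeries.X 1 ^ b * g) (q.1 + a, q.2 + b)
      = coef g q := by
  rw [Xpow_mul_Xpow, coef, coef]
  have hidx : idx (q.1 + a, q.2 + b) = idx (a, b) + idx q := by
    rw [show ((q.1 + a, q.2 + b) : ℕ × ℕ) = (a, b) + q by
      simp [Prod.ext_iff, Nat.add_comm], idx_add]
  rw [hidx, MvPowerSeries.coeff_add_monomial_mul, one_mul]

lemma mul_shift_cancel (a b : ℕ) (g h : PS)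
    (H : (MvPowerSeries.X 0 : PS) ^ a * MvPowerSeries.X 1 ^ b * g
       = (MvPowerSeries.X 0 : PS) ^ a * MvPowerSeries.X 1 ^ b * h) : g = h := by
  apply coef_ext
  intro q
  have := congrArg (fun F => coef F (q.1 + a, q.2 + b)) H
  simpa [coef_shift] using this

lemma sInf_image_sub (S : Set ℕ) (hS : S.Nonempty) (c : ℕ) :
    sInf ((fun n => n - c) '' S) = sInf S - c := by
  apply le_antisymm
  · exact Nat.sInf_le ⟨sInf S, Nat.sInf_mem hS, rfl⟩
  · apply le_csInf (hS.image _)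
    rintro _ ⟨n, hn, rfl⟩
    exact Nat.sub_le_sub_right (Nat.sInf_le hn) c

open Classical in
/-- The composition F = f ∘ φ_σ, defined coefficientwise. -/
def Fc (f : PS) (ξ ν : ℕ × ℕ) : PS :=
  fun m => if h : ∃ p : ℕ × ℕ,
      idx (p.1 * ξ.1 + p.2 * ξ.2, p.1 * ν.1 + p.2 * ν.2) = m then
    coef f h.choose else 0

theorem proper_preimage_order (f : PS) (hf : f ≠ 0) (ξ ν : ℕ × ℕ)
    (hdet : (ξ.1 : ℤ) * ν.2 - (ξ.2 : ℤ) * ν.1 = 1) :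
    Function.Injective
      (fun p : ℕ × ℕ => (p.1 * ξ.1 + p.2 * ξ.2, p.1 * ν.1 + p.2 * ν.2)) ∧
    (∃! F : PS,
      supp F = (fun p : ℕ × ℕ => (p.1 * ξ.1 + p.2 * ξ.2, p.1 * ν.1 + p.2 * ν.2)) '' supp f ∧
      ∀ p : ℕ × ℕ, coef F (p.1 * ξ.1 + p.2 * ξ.2, p.1 * ν.1 + p.2 * ν.2) = coef f p) ∧
    ∀ F : PS,
      (supp F = (fun p : ℕ × ℕ => (p.1 * ξ.1 + p.2 * ξ.2, p.1 * ν.1 + p.2 * ν.2)) '' supp f ∧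
       ∀ p : ℕ × ℕ, coef F (p.1 * ξ.1 + p.2 * ξ.2, p.1 * ν.1 + p.2 * ν.2) = coef f p) →
      (∃! ft : PS,
        F = MvPowerSeries.X 0 ^ lFun f ξ * MvPowerSeries.X 1 ^ lFun f ν * ft) ∧
      ∀ ft : PS,
        F = MvPowerSeries.X 0 ^ lFun f ξ * MvPowerSeries.X 1 ^ lFun f ν * ft →
        ordPS ft = lFun f (ξ + ν) - lFun f ξ - lFun f ν := by
  classical
  -- Injectivity of T
  have hTinj : Function.Injective
      (fun p : ℕ × ℕ => (p.1 * ξ.1 + p.2 * ξ.2, p.1 * ν.1 + p.2 * ν.2)) := by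
    intro p q h
    simp only [Prod.mk.injEq] at h
    have h1 : (p.1 : ℤ) * ξ.1 + p.2 * ξ.2 = q.1 * ξ.1 + q.2 * ξ.2 := by exact_mod_cast h.1
    have h2 : (p.1 : ℤ) * ν.1 + p.2 * ν.2 = q.1 * ν.1 + q.2 * ν.2 := by exact_mod_cast h.2
    have e1 : (p.1 : ℤ) = q.1 := by
      linear_combination (ν.2 : ℤ) * h1 - (ξ.2 : ℤ) * h2 - ((p.1 : ℤ) - q.1) * hdet
    have e2 : (p.2 : ℤ) = q.2 := by
      linear_combination (ξ.1 : ℤ) * h2 - (ν.1 : ℤ) * h1 - ((p.2 : ℤ) - q.2) * hdet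
    exact Prod.ext (by exact_mod_cast e1) (by exact_mod_cast e2)
  -- Properties of the explicit composition Fc
  have hF1 : ∀ p : ℕ × ℕ,
      coef (Fc f ξ ν) (p.1 * ξ.1 + p.2 * ξ.2, p.1 * ν.1 + p.2 * ν.2) = coef f p := by
    intro p
    have hex : ∃ p' : ℕ × ℕ,
        idx (p'.1 * ξ.1 + p'.2 * ξ.2, p'.1 * ν.1 + p'.2 * ν.2)
          = idx (p.1 * ξ.1 + p.2 * ξ.2, p.1 * ν.1 + p.2 * ν.2) := ⟨p, rfl⟩
    have heq : coef (Fc f ξ ν) (p.1 * ξ.1 + p.2 * ξ.2, p.1 * ν.1 + p.2 * ν.2)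
        = coef f hex.choose := by
      show Fc f ξ ν _ = _
      rw [Fc, dif_pos hex]
    rw [heq]
    have hspec := hex.choose_spec
    have : hex.choose = p := hTinj (idx_inj hspec)
    rw [this]
  have hF2 : supp (Fc f ξ ν)
      = (fun p : ℕ × ℕ => (p.1 * ξ.1 + p.2 * ξ.2, p.1 * ν.1 + p.2 * ν.2)) '' supp f := by
    ext q
    constructor
    · intro hq
      by_cases hex : ∃ p' : ℕ × ℕ,
          idx (p'.1 * ξ.1 + p'.2 * ξ.2, p'.1 * ν.1 + p'.2 * ν.2) = idx q
      · obtain ⟨p', hp'⟩ := hex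
        have hq' : (p'.1 * ξ.1 + p'.2 * ξ.2, p'.1 * ν.1 + p'.2 * ν.2) = q := idx_inj hp'
        refine ⟨p', ?_, hq'⟩
        have := hq
        rw [supp, Set.mem_setOf_eq, ← hq', hF1 p'] at this
        exact this
      · exfalso
        apply hq
        show Fc f ξ ν (idx q) = 0
        rw [Fc, dif_neg hex]
    · rintro ⟨p, hp, rfl⟩
      show coef (Fc f ξ ν) _ ≠ 0
      rw [hF1 p]
      exact hp
  refine ⟨hTinj, ⟨Fc f ξ ν, ⟨hF2, hF1⟩, ?_⟩, ?_⟩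
  · -- uniqueness of F
    rintro F' ⟨hs', hc'⟩
    apply coef_ext
    intro q
    by_cases hq : q ∈ (fun p : ℕ × ℕ =>
        (p.1 * ξ.1 + p.2 * ξ.2, p.1 * ν.1 + p.2 * ν.2)) '' supp f
    · obtain ⟨p, _, rfl⟩ := hq
      rw [hc' p, hF1 p]
    · have h1 : coef F' q = 0 := by
        by_contra h
        exact hq (hs' ▸ h)
      have h2 : coef (Fc f ξ ν) q = 0 := by
        by_contra h
        exact hq (hF2 ▸ h)
      rw [h1, h2]
  · -- Part 3
    rintro F ⟨hs, hc⟩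
    set a := lFun f ξ with ha
    set b := lFun f ν with hb
    have hbound : ∀ q ∈ supp F, a ≤ q.1 ∧ b ≤ q.2 := by
      rw [hs]
      rintro _ ⟨p, hp, rfl⟩
      exact ⟨lFun_le hp ξ, lFun_le hp ν⟩
    -- the explicit quotient
    set ft0 : PS := (fun m => MvPowerSeries.coeff (m + idx (a, b)) F
        : (Fin 2 →₀ ℕ) → ℂ) with hft0
    have hfact : F = MvPowerSeries.X 0 ^ a * MvPowerSeries.X 1 ^ b * ft0 := by
      apply MvPowerSeries.ext
      intro m
      rw [Xpow_mul_Xpow, MvPowerSeries.coeff_monomial_mul]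
      by_cases hm : idx (a, b) ≤ m
      · rw [if_pos hm, one_mul]
        show _ = ft0 (m - idx (a, b))
        rw [hft0]
        simp only
        rw [tsub_add_cancel_of_le hm]
      · rw [if_neg hm]
        rw [idx_le_iff] at hm
        push_neg at hm
        have hns : (m 0, m 1) ∉ supp F := by
          intro hmem
          have := hbound _ hmem
          by_cases h0 : a ≤ m 0
          · exact absurd (hm h0) (not_lt.mpr this.2)
          · exact h0 this.1
        have : coef F (m 0, m 1) = 0 := by
          by_contra h; exact hns h
        rwa [coef, idx_repr] at this
    have huniq : ∀ ft : PS,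
        F = MvPowerSeries.X 0 ^ a * MvPowerSeries.X 1 ^ b * ft → ft = ft0 := by
      intro ft hft
      exact mul_shift_cancel a b ft ft0 (hft ▸ hfact)
    refine ⟨⟨ft0, hfact, huniq⟩, ?_⟩
    intro ft hft
    have hcoef : ∀ q : ℕ × ℕ, coef ft q = coef F (q.1 + a, q.2 + b) := by
      intro q
      rw [hft, coef_shift]
    -- description of the image of the support of ft
    have himg : (fun q : ℕ × ℕ => q.1 + q.2) '' supp ft
        = (fun n => n - (a + b)) ''
          ((fun p : ℕ × ℕ => p.1 * (ξ + ν).1 + p.2 * (ξ + ν).2) '' supp f) := by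
      ext n
      constructor
      · rintro ⟨q, hq, rfl⟩
        have hqF : (q.1 + a, q.2 + b) ∈ supp F := by
          show coef F _ ≠ 0
          rw [← hcoef q]
          exact hq
        rw [hs] at hqF
        obtain ⟨p, hp, hTp⟩ := hqF
        simp only [Prod.mk.injEq] at hTp
        refine ⟨p.1 * (ξ + ν).1 + p.2 * (ξ + ν).2, ⟨p, hp, rfl⟩, ?_⟩
        have hsum : p.1 * (ξ + ν).1 + p.2 * (ξ + ν).2
            = (p.1 * ξ.1 + p.2 * ξ.2) + (p.1 * ν.1 + p.2 * ν.2) := by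
          simp only [Prod.fst_add, Prod.snd_add]; ring
        show p.1 * (ξ + ν).1 + p.2 * (ξ + ν).2 - (a + b) = q.1 + q.2
        rw [hsum, hTp.1, hTp.2]
        omega
      · rintro ⟨_, ⟨p, hp, rfl⟩, rfl⟩
        have hpa : a ≤ p.1 * ξ.1 + p.2 * ξ.2 := lFun_le hp ξ
        have hpb : b ≤ p.1 * ν.1 + p.2 * ν.2 := lFun_le hp ν
        refine ⟨(p.1 * ξ.1 + p.2 * ξ.2 - a, p.1 * ν.1 + p.2 * ν.2 - b), ?_, ?_⟩
        · show coef ft _ ≠ 0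
          rw [hcoef]
          simp only
          rw [Nat.sub_add_cancel hpa, Nat.sub_add_cancel hpb, hc p]
          exact hp
        · show (p.1 * ξ.1 + p.2 * ξ.2 - a) + (p.1 * ν.1 + p.2 * ν.2 - b)
              = p.1 * (ξ + ν).1 + p.2 * (ξ + ν).2 - (a + b)
          have hsum : p.1 * (ξ + ν).1 + p.2 * (ξ + ν).2
              = (p.1 * ξ.1 + p.2 * ξ.2) + (p.1 * ν.1 + p.2 * ν.2) := by
            simp only [Prod.fst_add, Prod.snd_add]; ring
          rw [hsum]
          omega
    rw [ordPS, himg, sInf_image_sub _ ((supp_nonempty hf).image _), ← Nat.sub_sub]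
    rfl

end
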